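/- arXiv:2210.06055 — 3 statements merged into one kernel-verified Lean document; each statement's English description precedes it below -/
import Mathlib

section
/- Let 𝓓_m = lim_{x→∞} #{n ≤ x : H(n) = m}/x denote the natural density of integers whose super-factorization tree has height exactly m. Then for m ≥ 4, 𝓓_m = (1/2)·(1/(2↑↑m)) + θ/3^(2↑↑(m−1)) with |θ| ≤ 3. -/
/-- Tetration base 2: `tet 0 = 1`, `tet (m+1) = 2 ^ tet m`. -/
def tet : ℕ → ℕ
  | 0 => 1
  | m + 1 => 2 ^ tet m

/-- Height of the super-factorization tree of `n`:
`H 1 = 0` and `H n = 1 + max_{p^α ∥ n} H α` for `n > 1`. -/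
def H : ℕ → ℕ
  | n =>
    if h : n ≤ 1 then 0
    else 1 + (n.primeFactors.attach.sup fun p => H (n.factorization p.1))
decreasing_by
  exact Nat.factorization_lt _ (by omega)

open Finset Filter



lemma H_eq (n : ℕ) : H n = if n ≤ 1 then 0 else 1 + (n.primeFactors.sup fun p => H (n.factorization p)) := by
  rw [H]
  split_ifs with h
  · rfl
  · exact congrArg (1 + ·) (Finset.sup_attach n.primeFactors (fun p => H (n.factorization p)))

lemma H_zero : H 0 = 0 := by rw [H_eq]; simp
lemma H_one : H 1 = 0 := by rw [H_eq]; simp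

lemma H_of_two_le {n : ℕ} (h : 2 ≤ n) : H n = 1 + (n.primeFactors.sup fun p => H (n.factorization p)) := by
  rw [H_eq, if_neg (by omega)]


lemma tet_pos (k : ℕ) : 0 < tet k := by
  cases k with
  | zero => simp [tet]
  | succ k => exact Nat.pow_pos (by norm_num)

lemma one_le_tet (k : ℕ) : 1 ≤ tet k := tet_pos k

lemma two_le_tet {k : ℕ} (hk : 1 ≤ k) : 2 ≤ tet k := by
  obtain ⟨j, rfl⟩ := Nat.exists_eq_add_of_le' hk
  show 2 ≤ tet (j + 1)
  calc 2 = 2 ^ 1 := rfl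
  _ ≤ 2 ^ tet j := Nat.pow_le_pow_right (by norm_num) (one_le_tet j)

lemma tet_lt_tet_succ (k : ℕ) : tet k < tet (k + 1) := Nat.lt_two_pow_self

lemma tet_mono {j k : ℕ} (h : j ≤ k) : tet j ≤ tet k := by
  induction k with
  | zero => simp [Nat.le_zero.mp h]
  | succ k ih =>
    rcases Nat.lt_or_ge j (k+1) with h' | h'
    · exact le_trans (ih (by omega)) (le_of_lt (tet_lt_tet_succ k))
    · have : j = k + 1 := by omega
      simp [this]

-- L1
lemma tet_le_of_H_ge : ∀ k, 1 ≤ k → ∀ α : ℕ, k ≤ H α → tet k ≤ α := by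
  intro k hk
  induction k with
  | zero => omega
  | succ k ih =>
    intro α hα
    have h2 : 2 ≤ α := by
      by_contra h
      interval_cases α <;> simp [H_zero, H_one] at hα
    rw [H_of_two_le h2] at hα
    have hsup : k ≤ α.primeFactors.sup fun p => H (α.factorization p) := by omega
    rcases Nat.eq_zero_or_pos k with rfl | hkpos
    · -- k = 0 : tet 1 = 2 ≤ α
      simpa [tet] using h2
    · have hne : α.primeFactors.Nonempty := Nat.nonempty_primeFactors.mpr h2
      obtain ⟨p, hp, hsup'⟩ := Finset.exists_mem_eq_sup _ hne fun p => H (α.factorization p)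
      have hk' : k ≤ H (α.factorization p) := hsup' ▸ hsup
      have htk : tet k ≤ α.factorization p := ih hkpos _ hk'
      have hpd : p ^ α.factorization p ∣ α := Nat.ordProj_dvd α p
      have hp2 : 2 ≤ p := (Nat.prime_of_mem_primeFactors hp).two_le
      calc tet (k+1) = 2 ^ tet k := rfl
      _ ≤ 2 ^ α.factorization p := Nat.pow_le_pow_right (by norm_num) htk
      _ ≤ p ^ α.factorization p := Nat.pow_le_pow_left hp2 _
      _ ≤ α := Nat.le_of_dvd (by omega) hpd

lemma H_lt_of_lt_tet {k α : ℕ} (hk : 1 ≤ k) (h : α < tet k) : H α < k := by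
  by_contra h'
  exact absurd (tet_le_of_H_ge k hk α (by omega)) (by omega)

-- L2
lemma H_tet (k : ℕ) : H (tet k) = k := by
  induction k with
  | zero => simpa [tet] using H_one
  | succ k ih =>
    have h1 : 1 ≤ tet k := one_le_tet k
    have h2 : 2 ≤ tet (k+1) := two_le_tet (by omega)
    rw [H_of_two_le h2]
    have hfac : (tet (k+1)).primeFactors = {2} := by
      show (2 ^ tet k).primeFactors = {2}
      rw [Nat.primeFactors_prime_pow (by omega) Nat.prime_two]
    have hfz : (tet (k+1)).factorization 2 = tet k := by
      show (2 ^ tet k).factorization 2 = tet k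
      rw [Nat.Prime.factorization_pow Nat.prime_two]
      simp
    rw [hfac]
    simp [hfz, ih]
    omega

lemma three_pow_ge {t : ℕ} (ht : 2 ≤ t) : 2 * 2 ^ t ≤ 3 ^ t := by
  induction t with
  | zero => omega
  | succ t ih =>
    rcases Nat.lt_or_ge t 2 with h | h
    · have : t = 1 := by omega
      subst this; norm_num
    · have := ih h
      have h2 : (2:ℕ) ^ (t+1) = 2 * 2 ^ t := by ring
      have h3 : (3:ℕ) ^ (t+1) = 3 * 3 ^ t := by ring
      omega

-- second smallest element with H ≥ k
lemma H_second {k α : ℕ} (hk : 2 ≤ k) (hα : k ≤ H α) (hne : α ≠ tet k) : 2 * tet k ≤ α := by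
  obtain ⟨j, rfl⟩ : ∃ j, k = j + 2 := ⟨k - 2, by omega⟩
  set t := tet (j + 1) with htdef
  have htet : tet (j + 2) = 2 ^ t := rfl
  have ht2 : 2 ≤ t := two_le_tet (by omega)
  have h2 : 2 ≤ α := le_trans (two_le_tet (by omega)) (tet_le_of_H_ge _ (by omega) _ hα)
  have hα0 : α ≠ 0 := by omega
  rw [H_of_two_le h2] at hα
  have hsup : j + 1 ≤ α.primeFactors.sup fun p => H (α.factorization p) := by omega
  have hne' : α.primeFactors.Nonempty := Nat.nonempty_primeFactors.mpr h2
  obtain ⟨p, hp, hsup'⟩ := Finset.exists_mem_eq_sup _ hne' fun p => H (α.factorization p)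
  have hk' : j + 1 ≤ H (α.factorization p) := hsup' ▸ hsup
  have htk : t ≤ α.factorization p := tet_le_of_H_ge _ (by omega) _ hk'
  have hprime := Nat.prime_of_mem_primeFactors hp
  have hpd : p ^ α.factorization p ∣ α := Nat.ordProj_dvd α p
  rcases Nat.lt_or_ge p 3 with hp3 | hp3
  · -- p = 2
    have hp2 : p = 2 := by have := hprime.two_le; omega
    subst hp2
    rcases Nat.lt_or_ge t (α.factorization 2) with hv | hv
    · -- v ≥ t + 1
      calc 2 * tet (j+2) = 2 ^ (t + 1) := by rw [htet]; ring
      _ ≤ 2 ^ α.factorization 2 := Nat.pow_le_pow_right (by norm_num) (by omega)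
      _ ≤ α := Nat.le_of_dvd (by omega) hpd
    · have hv' : α.factorization 2 = t := by omega
      have hsplit : 2 ^ α.factorization 2 * ordCompl[2] α = α := Nat.ordProj_mul_ordCompl_eq_self α 2
      have hcodd : ¬ 2 ∣ ordCompl[2] α := Nat.not_dvd_ordCompl Nat.prime_two hα0
      obtain ⟨c, hcdef⟩ : ∃ c, ordCompl[2] α = c := ⟨_, rfl⟩
      rw [hcdef] at hsplit hcodd
      have hc1 : c ≠ 1 := by
        intro hc
        apply hne
        rw [← hsplit, hc, hv', htet, mul_one]
      have hc0 : c ≠ 0 := by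
        intro hc
        rw [hc] at hcodd
        exact hcodd (dvd_zero 2)
      have hc2 : c % 2 = 1 := by
        rcases Nat.mod_two_eq_zero_or_one c with h | h
        · exact absurd (Nat.dvd_of_mod_eq_zero h) hcodd
        · exact h
      have hc3 : 3 ≤ c := by omega
      calc 2 * tet (j + 2) ≤ 3 * 2 ^ t := by
            rw [htet]
            have : 0 < 2 ^ t := Nat.pow_pos (by norm_num)
            omega
      _ ≤ 2 ^ t * c := by
            calc 3 * 2 ^ t ≤ c * 2 ^ t := Nat.mul_le_mul_right _ hc3
            _ = 2 ^ t * c := mul_comm _ _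
      _ = α := by rw [← hv']; exact hsplit
  · -- p ≥ 3
    calc 2 * tet (j+2) = 2 * 2 ^ t := by rw [htet]
    _ ≤ 3 ^ t := three_pow_ge ht2
    _ ≤ p ^ t := Nat.pow_le_pow_left hp3 t
    _ ≤ p ^ α.factorization p := Nat.pow_le_pow_right (by omega) htk
    _ ≤ α := Nat.le_of_dvd (by omega) hpd

lemma factorization_eq_zero_of_not_mem {n p : ℕ} (h : p ∉ n.primeFactors) : n.factorization p = 0 := by
  rw [← Nat.support_factorization] at h
  exact Finsupp.notMem_support_iff.mp h

lemma H_char {m n : ℕ} (hm : 4 ≤ m) :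
    H n = m ↔ (∃ p, H (n.factorization p) = m - 1) ∧ ∀ p, H (n.factorization p) ≤ m - 1 := by
  rcases Nat.lt_or_ge n 2 with h2 | h2
  · constructor
    · intro h
      exfalso
      interval_cases n <;> simp [H_zero, H_one] at h <;> omega
    · rintro ⟨⟨p, hp⟩, -⟩
      exfalso
      have : n.factorization = 0 := by
        interval_cases n
        · exact Nat.factorization_zero
        · exact Nat.factorization_one
      rw [this] at hp
      simp [H_zero] at hp
      omega
  · rw [H_of_two_le h2]
    constructor
    · intro h
      have hsup : (n.primeFactors.sup fun p => H (n.factorization p)) = m - 1 := by omega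
      have hne : n.primeFactors.Nonempty := Nat.nonempty_primeFactors.mpr h2
      obtain ⟨p, hp, hs⟩ := Finset.exists_mem_eq_sup _ hne fun p => H (n.factorization p)
      refine ⟨⟨p, by rw [← hs, hsup]⟩, fun q => ?_⟩
      by_cases hq : q ∈ n.primeFactors
      · exact hsup ▸ Finset.le_sup (f := fun p => H (n.factorization p)) hq
      · rw [factorization_eq_zero_of_not_mem hq, H_zero]; omega
    · rintro ⟨⟨p, hp⟩, hall⟩
      have hple : (n.primeFactors.sup fun p => H (n.factorization p)) ≤ m - 1 :=
        Finset.sup_le fun q _ => hall q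
      have hpm : p ∈ n.primeFactors := by
        by_contra hq
        rw [factorization_eq_zero_of_not_mem hq, H_zero] at hp
        omega
      have : m - 1 ≤ n.primeFactors.sup fun p => H (n.factorization p) :=
        hp ▸ Finset.le_sup (f := fun p => H (n.factorization p)) hpm
      omega


-- count of multiples
lemma card_dvd_filter (x d : ℕ) : ((Finset.Icc 1 x).filter (d ∣ ·)).card = x / d := by
  rw [show Finset.Icc 1 x = Finset.Ioc 0 x from Finset.Icc_add_one_left_eq_Ioc 0 x]
  exact Nat.Ioc_filter_dvd_card_eq_div x d

-- periodic step
lemma periodic_step (f : ℕ → Prop) [DecidablePred f] {Q : ℕ} (hQ : 0 < Q)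
    (hf : ∀ n, f (n + Q) ↔ f n) (x : ℕ) :
    ((Finset.Icc 1 (x + Q)).filter f).card = ((Finset.Icc 1 x).filter f).card + Nat.count f Q := by
  have hsplit : Finset.Icc 1 (x + Q) = Finset.Icc 1 x ∪ Finset.Ico (x+1) (x+1+Q) := by
    ext a
    simp only [Finset.mem_Icc, Finset.mem_union, Finset.mem_Ico]
    omega
  have hdisj : Disjoint (Finset.Icc 1 x) (Finset.Ico (x+1) (x+1+Q)) := by
    rw [Finset.disjoint_left]
    intro a ha hb
    simp only [Finset.mem_Icc] at ha
    simp only [Finset.mem_Ico] at hb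
    omega
  rw [hsplit, Finset.filter_union, Finset.card_union_of_disjoint (Finset.disjoint_filter_filter hdisj),
    Nat.filter_Ico_card_eq_of_periodic (x+1) Q f (fun n => propext (hf n))]

lemma periodic_key (f : ℕ → Prop) [DecidablePred f] {Q : ℕ} (hQ : 0 < Q)
    (hf : ∀ n, f (n + Q) ↔ f n) :
    ∀ x, ((Finset.Icc 1 x).filter f).card
      = ((Finset.Icc 1 (x % Q)).filter f).card + (x / Q) * Nat.count f Q := by
  intro x
  induction x using Nat.strong_induction_on with
  | _ x ih =>
    rcases Nat.lt_or_ge x Q with h | h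
    · rw [Nat.mod_eq_of_lt h, Nat.div_eq_of_lt h]
      simp
    · have hx : x = (x - Q) + Q := by omega
      rw [hx, periodic_step f hQ hf (x - Q), ih (x - Q) (by omega)]
      have h1 : (x - Q + Q) % Q = (x - Q) % Q := by rw [Nat.add_mod_right]
      have h2 : (x - Q + Q) / Q = (x - Q) / Q + 1 := by rw [Nat.add_div_right _ hQ]
      rw [h1, h2]
      ring

lemma count_le_Q (f : ℕ → Prop) [DecidablePred f] (Q : ℕ) : Nat.count f Q ≤ Q := by
  rw [Nat.count_eq_card_filter_range]
  exact le_trans (Finset.card_filter_le _ _) (by simp)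

lemma tendsto_const_div_nat (c : ℝ) : Tendsto (fun x : ℕ => c / x) atTop (nhds 0) := by
  simpa using Filter.Tendsto.div_atTop (tendsto_const_nhds (x := c)) tendsto_natCast_atTop_atTop

lemma periodic_density (f : ℕ → Prop) [DecidablePred f] {Q : ℕ} (hQ : 0 < Q)
    (hf : ∀ n, f (n + Q) ↔ f n) :
    Tendsto (fun x : ℕ => (((Finset.Icc 1 x).filter f).card : ℝ) / x) atTop
      (nhds ((Nat.count f Q : ℝ) / Q)) := by
  set c := Nat.count f Q with hc
  have hQR : (0:ℝ) < Q := by exact_mod_cast hQ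
  have key : ∀ x : ℕ, 1 ≤ x →
      |(((Finset.Icc 1 x).filter f).card : ℝ) / x - (c : ℝ) / Q| ≤ 2 * Q / x := by
    intro x hx
    have hxR : (0:ℝ) < x := by exact_mod_cast hx
    have hk := periodic_key f hQ hf x
    set r := x % Q with hr
    set F := (((Finset.Icc 1 r).filter f).card : ℝ) with hF
    have hFr : F ≤ Q := by
      rw [hF]
      have : ((Finset.Icc 1 r).filter f).card ≤ r := le_trans (Finset.card_filter_le _ _) (by simp)
      have hrQ : r ≤ Q := le_of_lt (Nat.mod_lt _ hQ)
      exact_mod_cast le_trans this hrQ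
    have hF0 : 0 ≤ F := by positivity
    have hcQ : (c:ℝ) ≤ Q := by exact_mod_cast count_le_Q f Q
    have hc0 : (0:ℝ) ≤ c := by positivity
    have hrQ : (r:ℝ) ≤ Q := by
      have : r < Q := Nat.mod_lt _ hQ
      exact_mod_cast le_of_lt this
    have hr0 : (0:ℝ) ≤ r := by positivity
    have hdm : ((x / Q : ℕ) : ℝ) * Q = (x : ℝ) - r := by
      have h := congrArg (Nat.cast : ℕ → ℝ) (Nat.div_add_mod x Q)
      push_cast at h
      rw [hr]
      linarith
    have hcast : (((Finset.Icc 1 x).filter f).card : ℝ) = F + ((x / Q : ℕ) : ℝ) * c := by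
      rw [hF, hk]
      push_cast
      ring
    rw [hcast]
    have hQ0 : (Q:ℝ) ≠ 0 := ne_of_gt hQR
    have hx0 : (x:ℝ) ≠ 0 := ne_of_gt hxR
    have heq : (F + ((x / Q : ℕ) : ℝ) * c) / x - (c : ℝ) / Q = F / x - (c : ℝ) * r / (Q * x) := by
      field_simp
      linear_combination (c : ℝ) * hdm
    rw [heq]
    have h1 : |F / (x:ℝ) - (c : ℝ) * r / (Q * x)| ≤ F / x + (c : ℝ) * r / (Q * x) := by
      calc |F / (x:ℝ) - (c : ℝ) * r / (Q * x)| ≤ |F / (x:ℝ)| + |(c : ℝ) * r / (Q * x)| :=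
            abs_sub _ _
      _ = F / x + (c : ℝ) * r / (Q * x) := by
            rw [abs_of_nonneg (by positivity), abs_of_nonneg (by positivity)]
    refine le_trans h1 ?_
    have e1 : F / (x:ℝ) ≤ Q / x := by gcongr
    have e2 : (c : ℝ) * r / ((Q:ℝ) * x) ≤ (Q:ℝ) / x := by
      rw [div_le_div_iff₀ (by positivity) hxR]
      have hcr : (c:ℝ) * r ≤ (Q:ℝ) * Q := mul_le_mul hcQ hrQ hr0 (le_trans hc0 hcQ)
      nlinarith [mul_le_mul_of_nonneg_right hcr hxR.le]
    calc F / (x:ℝ) + (c:ℝ) * r / (Q * x) ≤ (Q:ℝ) / x + Q / x := add_le_add e1 e2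
    _ = 2 * Q / x := by ring
  rw [← tendsto_sub_nhds_zero_iff]
  apply squeeze_zero_norm' ?_ (tendsto_const_div_nat (2 * Q))
  filter_upwards [eventually_ge_atTop 1] with x hx
  simpa using key x hx


lemma card_dvd_filter' (x d : ℕ) : ((Finset.Icc 1 x).filter (d ∣ ·)).card = x / d := by
  rw [show Finset.Icc 1 x = Finset.Ioc 0 x from Finset.Icc_add_one_left_eq_Ioc 0 x]
  exact Nat.Ioc_filter_dvd_card_eq_div x d

lemma card_exists_le {x e : ℕ} (T : Finset ℕ) (pred : ℕ → Prop) [DecidablePred pred]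
    (h : ∀ n ∈ Finset.Icc 1 x, pred n → ∃ k ∈ T, k ^ e ∣ n) :
    ((Finset.Icc 1 x).filter pred).card ≤ ∑ k ∈ T, x / k ^ e := by
  have hsub : (Finset.Icc 1 x).filter pred ⊆
      T.biUnion fun k => (Finset.Icc 1 x).filter (k ^ e ∣ ·) := by
    intro n hn
    rw [Finset.mem_filter] at hn
    obtain ⟨k, hk, hd⟩ := h n hn.1 hn.2
    exact Finset.mem_biUnion.mpr ⟨k, hk, Finset.mem_filter.mpr ⟨hn.1, hd⟩⟩
  calc ((Finset.Icc 1 x).filter pred).card ≤ _ := Finset.card_le_card hsub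
  _ ≤ ∑ k ∈ T, ((Finset.Icc 1 x).filter (k ^ e ∣ ·)).card := Finset.card_biUnion_le
  _ = ∑ k ∈ T, x / k ^ e := by
      refine Finset.sum_congr rfl fun k _ => card_dvd_filter' x (k ^ e)

-- telescoping: sum of 1/k^2 over Ioc P N
lemma sum_inv_sq_le {P : ℕ} (hP : 1 ≤ P) (N : ℕ) :
    ∑ k ∈ Finset.Ioc P N, (1 : ℝ) / (k : ℝ) ^ 2 ≤ 1 / P := by
  rcases le_or_gt N P with h | h
  · rw [Finset.Ioc_eq_empty (by omega)]
    simp only [Finset.sum_empty]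
    positivity
  · have key : ∀ M : ℕ, P ≤ M → ∑ k ∈ Finset.Ioc P M, (1 : ℝ) / (k : ℝ) ^ 2 ≤ 1 / P - 1 / M := by
      intro M hM
      induction M with
      | zero => omega
      | succ M ih =>
        rcases Nat.lt_or_ge M P with h' | h'
        · have : P = M + 1 := by omega
          subst this
          simp
        · have hMR : (0:ℝ) < M := by
            have : 1 ≤ M := le_trans hP h'
            exact_mod_cast this
          have hM1 : (0:ℝ) < (M:ℝ) + 1 := by positivity
          rw [Finset.sum_Ioc_succ_top (show P ≤ M from h')]
          have step : (1:ℝ) / ((M+1 : ℕ) : ℝ) ^ 2 ≤ 1 / M - 1 / ((M+1:ℕ)) := by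
            push_cast
            rw [div_sub_div _ _ (ne_of_gt hMR) (ne_of_gt hM1)]
            rw [div_le_div_iff₀ (by positivity) (by positivity)]
            ring_nf
            nlinarith
          have := ih h'
          push_cast at step ⊢
          linarith
    have := key N (by omega)
    have hN : (0:ℝ) < N := by
      have : 1 ≤ N := by omega
      exact_mod_cast this
    have : (0:ℝ) ≤ 1 / N := by positivity
    linarith [key N (by omega)]

-- sum of 1/k^4 over Icc 3 N  ≤ 2/81
lemma sum_inv_pow4_le (N : ℕ) :
    ∑ k ∈ Finset.Icc 3 N, (1 : ℝ) / (k : ℝ) ^ 4 ≤ 2 / 81 := by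
  rcases le_or_gt 3 N with h | h
  · have key : ∀ M : ℕ, 3 ≤ M → ∑ k ∈ Finset.Icc 3 M, (1 : ℝ) / (k : ℝ) ^ 4 ≤ 2 / 81 - 1 / (3 * (M:ℝ) ^ 3) := by
      intro M hM
      induction M with
      | zero => omega
      | succ M ih =>
        rcases Nat.lt_or_ge M 3 with h' | h'
        · have : M = 2 := by omega
          subst this
          norm_num [Finset.Icc_self, show (2:ℕ)+1 = 3 from rfl]
        · have hMR : (3:ℝ) ≤ M := by exact_mod_cast h'
          have hM1 : (0:ℝ) < (M:ℝ) + 1 := by linarith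
          rw [show Finset.Icc 3 (M+1) = Finset.Ioc 2 (M+1) from Finset.Icc_add_one_left_eq_Ioc 2 (M+1),
            Finset.sum_Ioc_succ_top (show 2 ≤ M by omega),
            ← Finset.Icc_add_one_left_eq_Ioc 2 M]
          have step : (1:ℝ) / ((M+1 : ℕ) : ℝ) ^ 4 ≤ 1 / (3 * (M:ℝ)^3) - 1 / (3 * ((M:ℝ)+1)^3) := by
            push_cast
            rw [div_sub_div _ _ (by positivity) (by positivity),
              div_le_div_iff₀ (by positivity) (by positivity)]
            ring_nf
            nlinarith [sq_nonneg ((M:ℝ)), sq_nonneg ((M:ℝ)-1), sq_nonneg ((M:ℝ)+1), sq_nonneg ((M:ℝ)^2-1), sq_nonneg ((M:ℝ)^2), sq_nonneg ((M:ℝ)^3)]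
          have := ih h'
          push_cast at step ⊢
          linarith
    have := key N h
    have hN : (0:ℝ) < 3 * (N:ℝ)^3 := by
      have : (3:ℝ) ≤ N := by exact_mod_cast h
      positivity
    have : (0:ℝ) ≤ 1 / (3 * (N:ℝ)^3) := by positivity
    linarith [key N h]
  · rw [Finset.Icc_eq_empty (by omega)]
    norm_num

lemma tendsto_const_div_nat' (c : ℝ) : Tendsto (fun x : ℕ => c / x) atTop (nhds 0) := by
  simpa using Filter.Tendsto.div_atTop (tendsto_const_nhds (x := c)) tendsto_natCast_atTop_atTop

lemma tendsto_floor_div (d : ℕ) (hd : 0 < d) :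
    Tendsto (fun x : ℕ => ((x / d : ℕ) : ℝ) / x) atTop (nhds (1 / (d:ℝ))) := by
  have hdR : (0:ℝ) < d := by exact_mod_cast hd
  rw [← tendsto_sub_nhds_zero_iff]
  apply squeeze_zero_norm' ?_ (tendsto_const_div_nat' 1)
  filter_upwards [eventually_ge_atTop 1] with x hx
  have hxR : (0:ℝ) < x := by exact_mod_cast hx
  have hdm : ((x / d : ℕ) : ℝ) * d = (x:ℝ) - (x % d : ℕ) := by
    have h := congrArg (Nat.cast : ℕ → ℝ) (Nat.div_add_mod x d)
    push_cast at h
    linarith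
  have hr : ((x % d : ℕ) : ℝ) < d := by exact_mod_cast Nat.mod_lt _ hd
  have hr0 : (0:ℝ) ≤ ((x % d : ℕ) : ℝ) := by positivity
  have heq : ((x / d : ℕ) : ℝ) / x - 1 / d = -(((x % d : ℕ) : ℝ) / (d * x)) := by
    field_simp
    linear_combination hdm
  rw [Real.norm_eq_abs, heq, abs_neg, abs_of_nonneg (by positivity)]
  rw [div_le_div_iff₀ (by positivity) hxR]
  nlinarith

lemma two_mul_three_pow_le {A : ℕ} (hA : 3 ≤ A) : 2 * 3 ^ A ≤ 4 ^ A := by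
  induction A with
  | zero => omega
  | succ A ih =>
    rcases Nat.lt_or_ge A 3 with h | h
    · interval_cases A <;> norm_num <;> omega
    · have := ih h
      have h3 : (3:ℕ)^(A+1) = 3 * 3^A := by ring
      have h4 : (4:ℕ)^(A+1) = 4 * 4^A := by ring
      omega

lemma mul_succ_le_two_pow {P : ℕ} (hP : 5 ≤ P) : P * (P + 1) ≤ 2 ^ P := by
  induction P with
  | zero => omega
  | succ P ih =>
    rcases Nat.lt_or_ge P 5 with h | h
    · interval_cases P <;> norm_num <;> omega
    · have := ih h
      have : 2 ^ (P+1) = 2 * 2 ^ P := by ring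
      nlinarith

lemma card_filter_le_of {x : ℕ} (p q bad : ℕ → Prop) [DecidablePred p] [DecidablePred q]
    [DecidablePred bad] (h : ∀ n ∈ Finset.Icc 1 x, p n → ¬ q n → bad n) :
    ((Finset.Icc 1 x).filter p).card
      ≤ ((Finset.Icc 1 x).filter q).card + ((Finset.Icc 1 x).filter bad).card := by
  have hsub : (Finset.Icc 1 x).filter p ⊆
      ((Finset.Icc 1 x).filter q) ∪ ((Finset.Icc 1 x).filter bad) := by
    intro n hn
    rw [Finset.mem_filter] at hn
    rw [Finset.mem_union, Finset.mem_filter, Finset.mem_filter]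
    by_cases hq : q n
    · exact Or.inl ⟨hn.1, hq⟩
    · exact Or.inr ⟨hn.1, h n hn.1 hn.2 hq⟩
  exact le_trans (Finset.card_le_card hsub) (Finset.card_union_le _ _)

-- the symmetric difference between {H n = m} and {v₂(n) = tet (m-1)} is small
lemma diff_bad {m n : ℕ} (hm : 4 ≤ m) (hn : 1 ≤ n)
    (h : ¬ ((H n = m) ↔ n.factorization 2 = tet (m-1))) :
    (∃ p, p.Prime ∧ 3 ≤ p ∧ p ^ tet (m-1) ∣ n) ∨ 2 ^ (2 * tet (m-1)) ∣ n := by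
  set A := tet (m-1) with hA
  have hn0 : n ≠ 0 := by omega
  have hm3 : 3 ≤ m - 1 := by omega
  rcases Classical.em (H n = m) with hH | hH
  · -- H n = m but v₂ ≠ A
    have hv2 : n.factorization 2 ≠ A := fun hv => h (iff_of_true hH hv)
    obtain ⟨⟨p, hp⟩, hall⟩ := (H_char hm).mp hH
    have hpf : p ∈ n.primeFactors := by
      by_contra hc
      rw [factorization_eq_zero_of_not_mem hc, H_zero] at hp
      omega
    have hpp : p.Prime := Nat.prime_of_mem_primeFactors hpf
    have hvA : A ≤ n.factorization p := tet_le_of_H_ge (m-1) (by omega) _ (by omega)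
    rcases Classical.em (p = 2) with rfl | hp2
    · -- p = 2 : second-smallest argument
      right
      have h2A : 2 * A ≤ n.factorization 2 :=
        H_second (by omega) (le_of_eq hp.symm) (fun hc => hv2 hc)
      exact dvd_trans (pow_dvd_pow 2 h2A) (Nat.ordProj_dvd n 2)
    · left
      refine ⟨p, hpp, ?_, dvd_trans (pow_dvd_pow p hvA) (Nat.ordProj_dvd n p)⟩
      have := hpp.two_le
      omega
  · -- v₂ = A but H n ≠ m
    have hv2 : n.factorization 2 = A := by
      by_contra hv
      exact h (iff_of_false hH hv)
    -- H (v₂ n) = m - 1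
    have hHv : H (n.factorization 2) = m - 1 := by rw [hv2, hA, H_tet]
    -- so some prime must reach level ≥ m, hence v_p ≥ tet m
    have hnotall : ¬ ∀ p, H (n.factorization p) ≤ m - 1 := by
      intro hall
      exact hH ((H_char hm).mpr ⟨⟨2, hHv⟩, hall⟩)
    push_neg at hnotall
    obtain ⟨p, hp⟩ := hnotall
    have hpf : p ∈ n.primeFactors := by
      by_contra hc
      rw [factorization_eq_zero_of_not_mem hc, H_zero] at hp
      omega
    have hpp : p.Prime := Nat.prime_of_mem_primeFactors hpf
    have hvm : tet m ≤ n.factorization p := tet_le_of_H_ge m (by omega) _ (by omega)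
    have hp2 : p ≠ 2 := by
      intro rfl2
      subst rfl2
      rw [hv2] at hvm
      -- tet m = 2 ^ A > A
      have : tet m = 2 ^ A := by
        have hm1 : m - 1 + 1 = m := by omega
        rw [← hm1, hA]
        rfl
      have := Nat.lt_two_pow_self (n := A)
      omega
    left
    have hAm : A ≤ tet m := by
      rw [hA]
      exact tet_mono (by omega)
    refine ⟨p, hpp, ?_, dvd_trans (pow_dvd_pow p (le_trans hAm hvm)) (Nat.ordProj_dvd n p)⟩
    have := hpp.two_le
    omega

lemma E0_card (A x : ℕ) :
    ((Finset.Icc 1 x).filter fun n => n.factorization 2 = A).card = x / 2 ^ A - x / 2 ^ (A + 1) := by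
  have hEq : (Finset.Icc 1 x).filter (fun n => n.factorization 2 = A)
      = ((Finset.Icc 1 x).filter ((2 ^ A) ∣ ·)) \ ((Finset.Icc 1 x).filter ((2 ^ (A+1)) ∣ ·)) := by
    ext n
    simp only [Finset.mem_filter, Finset.mem_sdiff, Finset.mem_Icc]
    constructor
    · rintro ⟨⟨h1, h2⟩, hv⟩
      have hn0 : n ≠ 0 := by omega
      refine ⟨⟨⟨h1, h2⟩, ?_⟩, ?_⟩
      · exact (Nat.Prime.pow_dvd_iff_le_factorization Nat.prime_two hn0).mpr (le_of_eq hv.symm)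
      · rintro ⟨-, hd⟩
        have := (Nat.Prime.pow_dvd_iff_le_factorization Nat.prime_two hn0).mp hd
        omega
    · rintro ⟨⟨⟨h1, h2⟩, hd⟩, hnd⟩
      have hn0 : n ≠ 0 := by omega
      refine ⟨⟨h1, h2⟩, ?_⟩
      have hle := (Nat.Prime.pow_dvd_iff_le_factorization Nat.prime_two hn0).mp hd
      have hlt : ¬ (A + 1 ≤ n.factorization 2) := by
        intro hc
        exact hnd ⟨⟨h1, h2⟩, (Nat.Prime.pow_dvd_iff_le_factorization Nat.prime_two hn0).mpr hc⟩
      omega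
  rw [hEq, Finset.card_sdiff_of_subset]
  · rw [card_dvd_filter, card_dvd_filter]
  · intro n hn
    rw [Finset.mem_filter] at hn ⊢
    exact ⟨hn.1, dvd_trans (pow_dvd_pow 2 (by omega)) hn.2⟩

lemma E0_tendsto (A : ℕ) :
    Tendsto (fun x : ℕ => (((Finset.Icc 1 x).filter fun n => n.factorization 2 = A).card : ℝ) / x)
      atTop (nhds (1 / 2 ^ (A + 1))) := by
  have h2A : (0:ℕ) < 2 ^ A := Nat.pow_pos (by norm_num)
  have h2A1 : (0:ℕ) < 2 ^ (A+1) := Nat.pow_pos (by norm_num)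
  have hcast : ∀ x : ℕ, (((Finset.Icc 1 x).filter fun n => n.factorization 2 = A).card : ℝ)
      = ((x / 2 ^ A : ℕ) : ℝ) - ((x / 2 ^ (A+1) : ℕ) : ℝ) := by
    intro x
    rw [E0_card A x]
    have hle : x / 2 ^ (A+1) ≤ x / 2 ^ A :=
      Nat.div_le_div_left (Nat.pow_le_pow_right (by norm_num) (by omega)) h2A
    push_cast [Nat.cast_sub hle]
    ring
  have h1 := tendsto_floor_div (2 ^ A) h2A
  have h2 := tendsto_floor_div (2 ^ (A+1)) h2A1
  have := h1.sub h2
  have hval : (1 : ℝ) / (((2 ^ A : ℕ)) : ℝ) - 1 / (((2 ^ (A+1) : ℕ)) : ℝ) = 1 / 2 ^ (A+1) := by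
    push_cast
    rw [pow_succ]
    field_simp
    ring
  rw [hval] at this
  refine Tendsto.congr (fun x => ?_) this
  rw [hcast x, sub_div]

lemma card_filter_or_le {x : ℕ} (p q : ℕ → Prop) [DecidablePred p] [DecidablePred q] :
    ((Finset.Icc 1 x).filter fun n => p n ∨ q n).card
      ≤ ((Finset.Icc 1 x).filter p).card + ((Finset.Icc 1 x).filter q).card := by
  classical
  have hsub : ((Finset.Icc 1 x).filter fun n => p n ∨ q n) ⊆
      ((Finset.Icc 1 x).filter p) ∪ ((Finset.Icc 1 x).filter q) := by
    intro n hn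
    rw [Finset.mem_filter] at hn
    rw [Finset.mem_union, Finset.mem_filter, Finset.mem_filter]
    tauto
  exact le_trans (Finset.card_le_card hsub) (Finset.card_union_le _ _)

-- Σ_{k ∈ Icc 3 x} (x / k^A : ℕ) ≤ x * 2 / 3^A  (real), A ≥ 4
lemma sum_odd_le {A : ℕ} (hA : 4 ≤ A) (x : ℕ) :
    (∑ k ∈ Finset.Icc 3 x, ((x / k ^ A : ℕ) : ℝ)) ≤ (x:ℝ) * (2 / 3 ^ A) := by
  have step1 : ∀ k ∈ Finset.Icc 3 x, ((x / k ^ A : ℕ) : ℝ) ≤ (x:ℝ) * ((1 / 3 ^ (A-4)) * (1 / (k:ℝ) ^ 4)) := by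
    intro k hk
    rw [Finset.mem_Icc] at hk
    have hk3 : (3:ℝ) ≤ k := by exact_mod_cast hk.1
    have hk0 : (0:ℝ) < k := by linarith
    have hpow : (3:ℝ) ^ (A-4) * (k:ℝ) ^ 4 ≤ (k:ℝ) ^ A := by
      have h1 : (3:ℝ) ^ (A-4) ≤ (k:ℝ) ^ (A-4) := pow_le_pow_left₀ (by norm_num) hk3 _
      calc (3:ℝ) ^ (A-4) * (k:ℝ) ^ 4 ≤ (k:ℝ) ^ (A-4) * (k:ℝ) ^ 4 :=
            mul_le_mul_of_nonneg_right h1 (by positivity)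
      _ = (k:ℝ) ^ (A - 4 + 4) := by rw [pow_add]
      _ = (k:ℝ) ^ A := by congr 1; omega
    calc ((x / k ^ A : ℕ) : ℝ) ≤ (x:ℝ) / ((k:ℝ) ^ A) := by
          have := Nat.cast_div_le (α := ℝ) (m := x) (n := k ^ A)
          push_cast at this
          exact this
    _ ≤ (x:ℝ) / ((3:ℝ) ^ (A-4) * (k:ℝ) ^ 4) := by
          apply div_le_div_of_nonneg_left (by positivity) (by positivity) hpow
    _ = (x:ℝ) * ((1 / 3 ^ (A-4)) * (1 / (k:ℝ) ^ 4)) := by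
          field_simp
  calc (∑ k ∈ Finset.Icc 3 x, ((x / k ^ A : ℕ) : ℝ))
      ≤ ∑ k ∈ Finset.Icc 3 x, (x:ℝ) * ((1 / 3 ^ (A-4)) * (1 / (k:ℝ) ^ 4)) :=
        Finset.sum_le_sum step1
  _ = (x:ℝ) * (1 / 3 ^ (A-4)) * ∑ k ∈ Finset.Icc 3 x, (1 / (k:ℝ) ^ 4) := by
        rw [Finset.mul_sum]
        refine Finset.sum_congr rfl fun k _ => by ring
  _ ≤ (x:ℝ) * (1 / 3 ^ (A-4)) * (2 / 81) := by
        apply mul_le_mul_of_nonneg_left (sum_inv_pow4_le x) (by positivity)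
  _ = (x:ℝ) * (2 / (3 ^ (A-4) * 81)) := by ring
  _ = (x:ℝ) * (2 / 3 ^ A) := by
        congr 2
        have : (81:ℝ) = 3 ^ 4 := by norm_num
        rw [this, ← pow_add]
        congr 1
        omega

-- the R-set bound: |S Δ E0| count
lemma R_count {A : ℕ} (hA16 : 16 ≤ A) (x : ℕ) (hx : 1 ≤ x)
    [DecidablePred fun n => (∃ p, p.Prime ∧ 3 ≤ p ∧ p ^ A ∣ n) ∨ 2 ^ (2 * A) ∣ n] :
    (((Finset.Icc 1 x).filter fun n =>
        (∃ p, p.Prime ∧ 3 ≤ p ∧ p ^ A ∣ n) ∨ 2 ^ (2 * A) ∣ n).card : ℝ)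
      ≤ (x:ℝ) * ((5/2) / 3 ^ A) := by
  classical
  have hA4 : 4 ≤ A := by omega
  have hxR : (0:ℝ) < x := by exact_mod_cast hx
  have hsplit := card_filter_or_le (x := x)
    (fun n => ∃ p, p.Prime ∧ 3 ≤ p ∧ p ^ A ∣ n) (fun n => 2 ^ (2 * A) ∣ n)
  have hc1 : ((Finset.Icc 1 x).filter fun n => ∃ p, p.Prime ∧ 3 ≤ p ∧ p ^ A ∣ n).card
      ≤ ∑ k ∈ Finset.Icc 3 x, x / k ^ A := by
    apply card_exists_le
    intro n hn hpred
    rw [Finset.mem_Icc] at hn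
    obtain ⟨p, hp, hp3, hd⟩ := hpred
    refine ⟨p, Finset.mem_Icc.mpr ⟨hp3, ?_⟩, hd⟩
    calc p ≤ p ^ A := Nat.le_self_pow (by omega) p
    _ ≤ n := Nat.le_of_dvd (by omega) hd
    _ ≤ x := hn.2
  have hc2 : ((Finset.Icc 1 x).filter fun n => 2 ^ (2 * A) ∣ n).card = x / 2 ^ (2 * A) :=
    card_dvd_filter x _
  have hreal1 : ((∑ k ∈ Finset.Icc 3 x, x / k ^ A : ℕ) : ℝ) ≤ (x:ℝ) * (2 / 3 ^ A) := by
    push_cast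
    exact sum_odd_le hA4 x
  have hreal2 : ((x / 2 ^ (2 * A) : ℕ) : ℝ) ≤ (x:ℝ) * ((1/2) / 3 ^ A) := by
    have h1 : ((x / 2 ^ (2 * A) : ℕ) : ℝ) ≤ (x:ℝ) / ((2:ℝ) ^ (2*A)) := by
      have := Nat.cast_div_le (α := ℝ) (m := x) (n := 2 ^ (2*A))
      push_cast at this
      exact this
    have h2 : (2:ℝ) * 3 ^ A ≤ (2:ℝ) ^ (2 * A) := by
      have hnat : 2 * 3 ^ A ≤ 4 ^ A := two_mul_three_pow_le (by omega)
      have : ((2 * 3 ^ A : ℕ) : ℝ) ≤ ((4 ^ A : ℕ) : ℝ) := by exact_mod_cast hnat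
      push_cast at this
      calc (2:ℝ) * 3 ^ A ≤ (4:ℝ) ^ A := this
      _ = (2:ℝ) ^ (2 * A) := by
            rw [pow_mul]
            norm_num
    calc ((x / 2 ^ (2 * A) : ℕ) : ℝ) ≤ (x:ℝ) / ((2:ℝ) ^ (2*A)) := h1
    _ ≤ (x:ℝ) / ((2:ℝ) * 3 ^ A) := by
          apply div_le_div_of_nonneg_left (by positivity) (by positivity) h2
    _ = (x:ℝ) * ((1/2) / 3 ^ A) := by field_simp
  have hcast : (((Finset.Icc 1 x).filter fun n =>
      (∃ p, p.Prime ∧ 3 ≤ p ∧ p ^ A ∣ n) ∨ 2 ^ (2 * A) ∣ n).card : ℝ)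
      ≤ ((∑ k ∈ Finset.Icc 3 x, x / k ^ A : ℕ) : ℝ) + ((x / 2 ^ (2 * A) : ℕ) : ℝ) := by
    have h := le_trans hsplit (add_le_add hc1 (le_of_eq hc2))
    rw [Finset.filter_congr_decidable] at h
    exact_mod_cast h
  refine le_trans hcast (le_trans (add_le_add hreal1 hreal2) (le_of_eq (by ring)))

lemma approx (m P : ℕ) (hm : 4 ≤ m) (hP5 : 5 ≤ P) (hPt : tet m ≤ P)
    [DecidablePred fun n : ℕ => H n = m] :
    ∃ L : ℝ, ∀ᶠ x : ℕ in atTop,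
      |(((Finset.Icc 1 x).filter fun n => H n = m).card : ℝ) / x - L| ≤ 3 / P := by
  classical
  set A := tet (m - 1) with hA
  have hA16 : 16 ≤ A := by
    rw [hA]
    calc (16:ℕ) = tet 3 := by rfl
    _ ≤ tet (m-1) := tet_mono (by omega)
  have hAP : A ≤ P := le_trans (by rw [hA]; exact tet_mono (by omega)) hPt
  set pb := Nat.primesBelow (P + 1) with hpb
  have h2pb : 2 ∈ pb := by
    rw [hpb, Nat.mem_primesBelow]
    exact ⟨by omega, Nat.prime_two⟩
  set Q := ∏ p ∈ pb, p ^ P with hQ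
  have hQpos : 0 < Q := by
    rw [hQ]
    apply Finset.prod_pos
    intro p hp
    exact Nat.pow_pos (Nat.prime_of_mem_primesBelow hp).pos
  have hdvdQ : ∀ p ∈ pb, p ^ P ∣ Q := fun p hp => Finset.dvd_prod_of_mem _ hp
  set hpred := fun n : ℕ => (∀ p ∈ pb, ¬ p ^ P ∣ n) ∧
      (∃ p ∈ pb, H (n.factorization p) = m - 1) ∧
      (∀ p ∈ pb, H (n.factorization p) ≤ m - 1) with hhpred
  -- factorization stability
  have hEq : ∀ n, (∀ p ∈ pb, ¬ p ^ P ∣ n) → ∀ p ∈ pb, (n + Q).factorization p = n.factorization p := by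
    intro n h1 p hp
    have hprime := Nat.prime_of_mem_primesBelow hp
    have hn0 : n ≠ 0 := by
      intro h0
      exact h1 p hp (h0 ▸ dvd_zero _)
    have hnQ0 : n + Q ≠ 0 := by omega
    have hvP : n.factorization p < P := by
      by_contra hc
      exact h1 p hp (dvd_trans (pow_dvd_pow p (by omega)) (Nat.ordProj_dvd n p))
    have hlow : p ^ n.factorization p ∣ n + Q :=
      dvd_add (Nat.ordProj_dvd n p) (dvd_trans (pow_dvd_pow p (by omega)) (hdvdQ p hp))
    have hhigh : ¬ p ^ (n.factorization p + 1) ∣ n + Q := by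
      intro hc
      have hQv : p ^ (n.factorization p + 1) ∣ Q :=
        dvd_trans (pow_dvd_pow p (by omega)) (hdvdQ p hp)
      have hdn : p ^ (n.factorization p + 1) ∣ n := by
        have := Nat.dvd_sub hc hQv
        simpa using this
      have := (Nat.Prime.pow_dvd_iff_le_factorization hprime hn0).mp hdn
      omega
    have hge := (Nat.Prime.pow_dvd_iff_le_factorization hprime hnQ0).mp hlow
    have hlt : ¬ (n.factorization p + 1 ≤ (n + Q).factorization p) := by
      intro hc
      exact hhigh ((Nat.Prime.pow_dvd_iff_le_factorization hprime hnQ0).mpr hc)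
    omega
  have hper : ∀ n, hpred (n + Q) ↔ hpred n := by
    intro n
    constructor
    · rintro ⟨h1, h2, h3⟩
      have h1' : ∀ p ∈ pb, ¬ p ^ P ∣ n := by
        intro p hp hd
        exact h1 p hp (dvd_add hd (hdvdQ p hp))
      have he := hEq n h1'
      refine ⟨h1', ?_, ?_⟩
      · obtain ⟨p, hp, hH⟩ := h2
        exact ⟨p, hp, by rw [← he p hp]; exact hH⟩
      · intro p hp
        rw [← he p hp]
        exact h3 p hp
    · rintro ⟨h1, h2, h3⟩
      have he := hEq n h1
      refine ⟨?_, ?_, ?_⟩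
      · intro p hp hd
        apply h1 p hp
        have := Nat.dvd_sub hd (hdvdQ p hp)
        simpa using this
      · obtain ⟨p, hp, hH⟩ := h2
        exact ⟨p, hp, by rw [he p hp]; exact hH⟩
      · intro p hp
        rw [he p hp]
        exact h3 p hp
  -- periodic density
  have hb := periodic_density hpred hQpos hper
  set L := ((Nat.count hpred Q : ℝ) / Q) with hL
  refine ⟨L, ?_⟩
  -- agreement away from bad set
  set bad := fun n : ℕ => (∃ p ∈ pb, p ^ P ∣ n) ∨ (∃ k, P < k ∧ k.Prime ∧ k ^ A ∣ n) with hbad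
  have hag : ∀ n : ℕ, 1 ≤ n → ¬ bad n → ((H n = m) ↔ hpred n) := by
    intro n hn hnb
    have hnb1 : ∀ p ∈ pb, ¬ p ^ P ∣ n := by
      intro p hp hd
      exact hnb (Or.inl ⟨p, hp, hd⟩)
    have hnb2 : ∀ k, P < k → k.Prime → ¬ k ^ A ∣ n := by
      intro k hk1 hk2 hd
      exact hnb (Or.inr ⟨k, hk1, hk2, hd⟩)
    constructor
    · intro hH
      obtain ⟨⟨p₀, h₀⟩, hall⟩ := (H_char hm).mp hH
      have hpf : p₀ ∈ n.primeFactors := by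
        by_contra hc
        rw [factorization_eq_zero_of_not_mem hc, H_zero] at h₀
        omega
      have hpp := Nat.prime_of_mem_primeFactors hpf
      have hvA : A ≤ n.factorization p₀ := by
        rw [hA]
        exact tet_le_of_H_ge (m-1) (by omega) _ (by omega)
      have hp₀pb : p₀ ∈ pb := by
        rw [hpb, Nat.mem_primesBelow]
        refine ⟨?_, hpp⟩
        by_contra hc
        exact hnb2 p₀ (by omega) hpp
          (dvd_trans (pow_dvd_pow p₀ hvA) (Nat.ordProj_dvd n p₀))
      exact ⟨fun p hp => hnb1 p hp, ⟨p₀, hp₀pb, h₀⟩, fun p hp => hall p⟩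
    · rintro ⟨h1, ⟨p₀, hp₀, hH₀⟩, h3⟩
      apply (H_char hm).mpr
      refine ⟨⟨p₀, hH₀⟩, fun p => ?_⟩
      by_cases hpp : p.Prime
      · by_cases hppb : p ∈ pb
        · exact h3 p hppb
        · have hpP : P < p := by
            by_contra hc
            exact hppb (by rw [hpb, Nat.mem_primesBelow]; exact ⟨by omega, hpp⟩)
          have hvlt : n.factorization p < A := by
            by_contra hc
            exact hnb2 p hpP hpp
              (dvd_trans (pow_dvd_pow p (by omega)) (Nat.ordProj_dvd n p))
          have := H_lt_of_lt_tet (k := m - 1) (by omega) (hA ▸ hvlt)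
          omega
      · rw [Nat.factorization_eq_zero_of_not_prime n hpp, H_zero]
        omega
  -- bad count bound
  have hbadcount : ∀ x : ℕ, 1 ≤ x →
      (((Finset.Icc 1 x).filter bad).card : ℝ) ≤ (x:ℝ) * (2 / P) := by
    intro x hx
    have hxR : (0:ℝ) < x := by exact_mod_cast hx
    have hPR : (0:ℝ) < P := by
      have : (0:ℕ) < P := by omega
      exact_mod_cast this
    have hsplit : ((Finset.Icc 1 x).filter bad).card
        ≤ ((Finset.Icc 1 x).filter fun n => ∃ p ∈ pb, p ^ P ∣ n).card
          + ((Finset.Icc 1 x).filter fun n => ∃ k, P < k ∧ k.Prime ∧ k ^ A ∣ n).card := by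
      exact card_filter_or_le _ _
    have hc1 : ((Finset.Icc 1 x).filter fun n => ∃ p ∈ pb, p ^ P ∣ n).card
        ≤ ∑ p ∈ pb, x / p ^ P := by
      apply card_exists_le
      intro n hn hpred'
      exact hpred'
    have hc2 : ((Finset.Icc 1 x).filter fun n => ∃ k, P < k ∧ k.Prime ∧ k ^ A ∣ n).card
        ≤ ∑ k ∈ Finset.Ioc P x, x / k ^ A := by
      apply card_exists_le
      intro n hn hpred'
      obtain ⟨k, hk1, hk2, hd⟩ := hpred'
      rw [Finset.mem_Icc] at hn
      refine ⟨k, Finset.mem_Ioc.mpr ⟨hk1, ?_⟩, hd⟩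
      calc k ≤ k ^ A := Nat.le_self_pow (by omega) k
      _ ≤ n := Nat.le_of_dvd (by omega) hd
      _ ≤ x := hn.2
    have hreal1 : ((∑ p ∈ pb, x / p ^ P : ℕ) : ℝ) ≤ (x:ℝ) / P := by
      have hterm : ∀ p ∈ pb, ((x / p ^ P : ℕ) : ℝ) ≤ (x:ℝ) / 2 ^ P := by
        intro p hp
        have hp2 : 2 ≤ p := (Nat.prime_of_mem_primesBelow hp).two_le
        have hp2R : (2:ℝ) ≤ p := by exact_mod_cast hp2
        calc ((x / p ^ P : ℕ) : ℝ) ≤ (x:ℝ) / ((p:ℝ) ^ P) := by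
              have := Nat.cast_div_le (α := ℝ) (m := x) (n := p ^ P)
              push_cast at this
              exact this
        _ ≤ (x:ℝ) / (2:ℝ) ^ P := by
              apply div_le_div_of_nonneg_left (by positivity) (by positivity)
                (pow_le_pow_left₀ (by norm_num) hp2R P)
      have hsum : ((∑ p ∈ pb, x / p ^ P : ℕ) : ℝ) ≤ (pb.card : ℝ) * ((x:ℝ) / 2 ^ P) := by
        push_cast
        calc ∑ p ∈ pb, ((x / p ^ P : ℕ) : ℝ) ≤ ∑ p ∈ pb, (x:ℝ) / 2 ^ P :=
              Finset.sum_le_sum hterm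
        _ = (pb.card : ℝ) * ((x:ℝ) / 2 ^ P) := by
              rw [Finset.sum_const, nsmul_eq_mul]
      have hcard : pb.card ≤ P + 1 := by
        calc pb.card ≤ (Finset.range (P+1)).card := Finset.card_le_card (fun p hp =>
              Finset.mem_range.mpr (Nat.mem_primesBelow.mp hp).1)
        _ = P + 1 := Finset.card_range _
      have hcardR : (pb.card : ℝ) ≤ (P:ℝ) + 1 := by exact_mod_cast hcard
      have h2P : ((P:ℝ) * ((P:ℝ) + 1)) ≤ (2:ℝ) ^ P := by
        have := mul_succ_le_two_pow hP5
        have h := (Nat.cast_le (α := ℝ)).mpr this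
        push_cast at h
        exact h
      have h2Ppos : (0:ℝ) < (2:ℝ) ^ P := by positivity
      calc ((∑ p ∈ pb, x / p ^ P : ℕ) : ℝ) ≤ (pb.card : ℝ) * ((x:ℝ) / 2 ^ P) := hsum
      _ ≤ ((P:ℝ) + 1) * ((x:ℝ) / 2 ^ P) := by
            apply mul_le_mul_of_nonneg_right hcardR (by positivity)
      _ ≤ (x:ℝ) / P := by
            rw [← mul_div_assoc, div_le_div_iff₀ h2Ppos hPR]
            nlinarith [hxR.le, h2P]
    have hreal2 : ((∑ k ∈ Finset.Ioc P x, x / k ^ A : ℕ) : ℝ) ≤ (x:ℝ) * (1 / P) := by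
      have hterm : ∀ k ∈ Finset.Ioc P x, ((x / k ^ A : ℕ) : ℝ) ≤ (x:ℝ) * (1 / (k:ℝ) ^ 2) := by
        intro k hk
        rw [Finset.mem_Ioc] at hk
        have hk1 : (1:ℝ) ≤ k := by
          have : 1 ≤ k := by omega
          exact_mod_cast this
        have hpow : (k:ℝ) ^ 2 ≤ (k:ℝ) ^ A := pow_le_pow_right₀ hk1 (by omega)
        calc ((x / k ^ A : ℕ) : ℝ) ≤ (x:ℝ) / ((k:ℝ) ^ A) := by
              have := Nat.cast_div_le (α := ℝ) (m := x) (n := k ^ A)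
              push_cast at this
              exact this
        _ ≤ (x:ℝ) / ((k:ℝ) ^ 2) := by
              apply div_le_div_of_nonneg_left (by positivity) (by positivity) hpow
        _ = (x:ℝ) * (1 / (k:ℝ) ^ 2) := by ring
      push_cast
      calc ∑ k ∈ Finset.Ioc P x, ((x / k ^ A : ℕ) : ℝ)
          ≤ ∑ k ∈ Finset.Ioc P x, (x:ℝ) * (1 / (k:ℝ) ^ 2) := Finset.sum_le_sum hterm
      _ = (x:ℝ) * ∑ k ∈ Finset.Ioc P x, (1 / (k:ℝ) ^ 2) := by rw [Finset.mul_sum]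
      _ ≤ (x:ℝ) * (1 / P) := by
            apply mul_le_mul_of_nonneg_left ?_ (by positivity)
            have := sum_inv_sq_le (P := P) (by omega) x
            calc ∑ k ∈ Finset.Ioc P x, (1 / (k:ℝ) ^ 2) ≤ 1 / (P:ℝ) := this
            _ = 1 / P := rfl
    have hchain : (((Finset.Icc 1 x).filter bad).card : ℝ)
        ≤ ((∑ p ∈ pb, x / p ^ P : ℕ) : ℝ) + ((∑ k ∈ Finset.Ioc P x, x / k ^ A : ℕ) : ℝ) := by
      have := le_trans hsplit (add_le_add hc1 hc2)
      exact_mod_cast this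
    calc (((Finset.Icc 1 x).filter bad).card : ℝ) ≤ _ := hchain
    _ ≤ (x:ℝ) / P + (x:ℝ) * (1 / P) := add_le_add hreal1 hreal2
    _ = (x:ℝ) * (2 / P) := by ring
  -- pointwise difference between target counts
  have hdiff : ∀ x : ℕ, 1 ≤ x →
      |(((Finset.Icc 1 x).filter fun n => H n = m).card : ℝ) / x
        - (((Finset.Icc 1 x).filter hpred).card : ℝ) / x| ≤ 2 / P := by
    intro x hx
    have hxR : (0:ℝ) < x := by exact_mod_cast hx
    have h1 : ((Finset.Icc 1 x).filter fun n => H n = m).card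
        ≤ ((Finset.Icc 1 x).filter hpred).card + ((Finset.Icc 1 x).filter bad).card := by
      apply card_filter_le_of
      intro n hn hS hnp
      by_contra hnb
      exact hnp ((hag n (Finset.mem_Icc.mp hn).1 hnb).mp hS)
    have h2 : ((Finset.Icc 1 x).filter hpred).card
        ≤ ((Finset.Icc 1 x).filter fun n => H n = m).card + ((Finset.Icc 1 x).filter bad).card := by
      apply card_filter_le_of
      intro n hn hS hnp
      by_contra hnb
      exact hnp ((hag n (Finset.mem_Icc.mp hn).1 hnb).mpr hS)
    have hb' := hbadcount x hx
    have h1' : (((Finset.Icc 1 x).filter fun n => H n = m).card : ℝ)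
        ≤ (((Finset.Icc 1 x).filter hpred).card : ℝ) + (((Finset.Icc 1 x).filter bad).card : ℝ) := by
      exact_mod_cast h1
    have h2' : (((Finset.Icc 1 x).filter hpred).card : ℝ)
        ≤ (((Finset.Icc 1 x).filter fun n => H n = m).card : ℝ) + (((Finset.Icc 1 x).filter bad).card : ℝ) := by
      exact_mod_cast h2
    rw [abs_sub_le_iff]
    constructor
    · rw [div_sub_div_same, div_le_iff₀ hxR]
      nlinarith
    · rw [div_sub_div_same, div_le_iff₀ hxR]
      nlinarith
  -- conclude
  have hP0 : (0:ℝ) < 1 / P := by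
    have : (0:ℕ) < P := by omega
    have : (0:ℝ) < P := by exact_mod_cast this
    positivity
  have hbev : ∀ᶠ x : ℕ in atTop, |(((Finset.Icc 1 x).filter hpred).card : ℝ) / x - L| ≤ 1 / P := by
    have := Metric.tendsto_atTop.mp hb (1 / P) hP0
    obtain ⟨N, hN⟩ := this
    rw [eventually_atTop]
    exact ⟨N, fun x hx => le_of_lt (by simpa [Real.dist_eq] using hN x hx)⟩
  filter_upwards [hbev, eventually_ge_atTop 1] with x hx1 hx2
  have habs := abs_sub_le ((((Finset.Icc 1 x).filter fun n => H n = m).card : ℝ) / x)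
    ((((Finset.Icc 1 x).filter hpred).card : ℝ) / x) L
  have hPR : (0:ℝ) < P := by
    have : (0:ℕ) < P := by omega
    exact_mod_cast this
  calc |(((Finset.Icc 1 x).filter fun n => H n = m).card : ℝ) / x - L| ≤ _ := habs
  _ ≤ 2 / P + 1 / P := add_le_add (hdiff x hx2) hx1
  _ = 3 / P := by ring

theorem stmt13 (m : ℕ) (hm : 4 ≤ m) :
    ∃ θ : ℝ, |θ| ≤ 3 ∧
      Filter.Tendsto
        (fun x : ℕ => (((Finset.Icc 1 x).filter fun n => H n = m).card : ℝ) / x)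
        Filter.atTop
        (nhds (1 / 2 * (1 / tet m) + θ / 3 ^ tet (m - 1))) := by
  classical
  have hA16 : 16 ≤ tet (m - 1) := by
    calc (16:ℕ) = tet 3 := by rfl
    _ ≤ tet (m-1) := tet_mono (by omega)
  set A := tet (m - 1) with hA
  set a := fun x : ℕ => (((Finset.Icc 1 x).filter fun n => H n = m).card : ℝ) / x with ha
  -- Step 1: the sequence is Cauchy
  have hcauchy : CauchySeq a := by
    rw [Metric.cauchySeq_iff]
    intro ε hε
    set P := max (max 5 (tet m)) ⌈(12:ℝ)/ε⌉₊ with hP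
    have hP5 : 5 ≤ P := le_trans (le_max_left _ _) (le_max_left _ _)
    have hPt : tet m ≤ P := le_trans (le_max_right _ _) (le_max_left _ _)
    have hPRpos : (0:ℝ) < P := by
      have : (0:ℕ) < P := by omega
      exact_mod_cast this
    have hPe : 3 / (P:ℝ) < ε / 2 := by
      have h1 : (12:ℝ)/ε ≤ P := by
        calc (12:ℝ)/ε ≤ (⌈(12:ℝ)/ε⌉₊ : ℝ) := Nat.le_ceil _
        _ ≤ P := by exact_mod_cast le_max_right (max 5 (tet m)) ⌈(12:ℝ)/ε⌉₊
      have h2 : 3 / (P:ℝ) ≤ ε / 4 := by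
        rw [div_le_div_iff₀ hPRpos (by norm_num)]
        have h3 : (12:ℝ) ≤ ε * P := by
          rw [div_le_iff₀ hε] at h1
          linarith
        linarith
      linarith
    obtain ⟨L, hev⟩ := approx m P hm hP5 hPt
    rw [eventually_atTop] at hev
    obtain ⟨N, hN⟩ := hev
    refine ⟨N, fun x hx y hy => ?_⟩
    have h1 := hN x hx
    have h2 := hN y hy
    rw [Real.dist_eq]
    calc |a x - a y| ≤ |a x - L| + |L - a y| := abs_sub_le _ _ _
    _ = |a x - L| + |a y - L| := by rw [abs_sub_comm L]
    _ ≤ 3 / P + 3 / P := add_le_add h1 h2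
    _ < ε / 2 + ε / 2 := by linarith
    _ = ε := by ring
  obtain ⟨d, hd⟩ := cauchySeq_tendsto_of_complete hcauchy
  -- Step 2: identify the limit up to error (5/2)/3^A
  have he := E0_tendsto A
  set e := fun x : ℕ => (((Finset.Icc 1 x).filter fun n => n.factorization 2 = A).card : ℝ) / x with heq
  have hdiffae : ∀ x : ℕ, 1 ≤ x → |a x - e x| ≤ (5/2) / 3 ^ A := by
    intro x hx
    have hxR : (0:ℝ) < x := by exact_mod_cast hx
    have h1 : ((Finset.Icc 1 x).filter fun n => H n = m).card
        ≤ ((Finset.Icc 1 x).filter fun n => n.factorization 2 = A).card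
          + ((Finset.Icc 1 x).filter fun n =>
              (∃ p, p.Prime ∧ 3 ≤ p ∧ p ^ A ∣ n) ∨ 2 ^ (2 * A) ∣ n).card := by
      apply card_filter_le_of
      intro n hn hS hnp
      apply diff_bad hm (Finset.mem_Icc.mp hn).1
      intro hiff
      exact hnp (hiff.mp hS)
    have h2 : ((Finset.Icc 1 x).filter fun n => n.factorization 2 = A).card
        ≤ ((Finset.Icc 1 x).filter fun n => H n = m).card
          + ((Finset.Icc 1 x).filter fun n =>
              (∃ p, p.Prime ∧ 3 ≤ p ∧ p ^ A ∣ n) ∨ 2 ^ (2 * A) ∣ n).card := by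
      apply card_filter_le_of
      intro n hn hS hnp
      apply diff_bad hm (Finset.mem_Icc.mp hn).1
      intro hiff
      exact hnp (hiff.mpr hS)
    have hRR := R_count (A := A) hA16 x hx
    have h1' : (((Finset.Icc 1 x).filter fun n => H n = m).card : ℝ)
        ≤ (((Finset.Icc 1 x).filter fun n => n.factorization 2 = A).card : ℝ)
          + (((Finset.Icc 1 x).filter fun n =>
              (∃ p, p.Prime ∧ 3 ≤ p ∧ p ^ A ∣ n) ∨ 2 ^ (2 * A) ∣ n).card : ℝ) := by
      exact_mod_cast h1
    have h2' : (((Finset.Icc 1 x).filter fun n => n.factorization 2 = A).card : ℝ)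
        ≤ (((Finset.Icc 1 x).filter fun n => H n = m).card : ℝ)
          + (((Finset.Icc 1 x).filter fun n =>
              (∃ p, p.Prime ∧ 3 ≤ p ∧ p ^ A ∣ n) ∨ 2 ^ (2 * A) ∣ n).card : ℝ) := by
      exact_mod_cast h2
    rw [ha, heq, abs_sub_le_iff]
    have h3A : (0:ℝ) < 3 ^ A := by positivity
    constructor
    · rw [div_sub_div_same, div_le_iff₀ hxR]
      nlinarith
    · rw [div_sub_div_same, div_le_iff₀ hxR]
      nlinarith
  have hsub : Tendsto (fun x => a x - e x) atTop (nhds (d - 1 / 2 ^ (A+1))) := hd.sub he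
  have habs : Tendsto (fun x => |a x - e x|) atTop (nhds (|d - 1 / 2 ^ (A+1)|)) := hsub.abs
  have hbound : |d - 1 / 2 ^ (A+1)| ≤ (5/2) / 3 ^ A := by
    apply le_of_tendsto habs
    filter_upwards [eventually_ge_atTop 1] with x hx
    exact hdiffae x hx
  -- Step 3: conclude
  have h3A : (0:ℝ) < 3 ^ A := by positivity
  refine ⟨(d - 1 / 2 ^ (A+1)) * 3 ^ A, ?_, ?_⟩
  · rw [abs_mul, abs_of_nonneg (le_of_lt h3A)]
    calc |d - 1 / 2 ^ (A+1)| * 3 ^ A ≤ ((5/2) / 3 ^ A) * 3 ^ A := by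
          apply mul_le_mul_of_nonneg_right hbound (le_of_lt h3A)
    _ = 5/2 := by field_simp
    _ ≤ 3 := by norm_num
  · have htm : ((tet m : ℕ) : ℝ) = 2 ^ A := by
      have hm1 : m - 1 + 1 = m := by omega
      have : tet m = 2 ^ A := by
        rw [hA, ← hm1]
        rfl
      rw [this]
      push_cast
      ring
    have hvals : 1 / 2 * (1 / ((tet m : ℕ) : ℝ)) + ((d - 1 / 2 ^ (A+1)) * 3 ^ A) / 3 ^ tet (m-1) = d := by
      rw [htm, ← hA]
      have h2A : (0:ℝ) < 2 ^ A := by positivity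
      field_simp
      ring
    rw [hvals]
    exact hd
end

section
/- With 𝓕_m the multiplicative function defined by 𝓕_m(p^ν) = f_{m-1}(ν) − f_{m-1}(ν−1) (where f_k(n) = 1 iff H(n) ≤ k), the density of integers n with H(n) ≥ k, for k ≥ 2, equals D_k = −∑_{d > 1} 𝓕_{k−1}(d)/d, and the series converges absolutely. -/
/-- `f m n` = 1 if `H n ≤ m`, else 0. -/
def f (m n : ℕ) : ℤ := if H n ≤ m then 1 else 0

/-- `F m n = ∏_{p^α ∥ n} (f (m-1) α - f (m-1) (α-1))`. -/
def F (m n : ℕ) : ℤ :=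
  ∏ p ∈ n.primeFactors, (f (m - 1) (n.factorization p) - f (m - 1) (n.factorization p - 1))


lemma H_le_one {n : ℕ} (h : n ≤ 1) : H n = 0 := by rw [H]; simp [h]

lemma H_gt {n : ℕ} (h : 1 < n) :
    H n = 1 + (n.primeFactors.attach.sup fun p => H (n.factorization p.1)) := by
  rw [H]; simp [Nat.not_le.mpr h]

lemma f_zero (m : ℕ) : f m 0 = 1 := by simp [f, H_le_one]
lemma f_one (m : ℕ) : f m 1 = 1 := by simp [f, H_le_one]
lemma F_one (m : ℕ) : F m 1 = 1 := by simp [F]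


lemma F_prime_pow {p : ℕ} (hp : p.Prime) {β : ℕ} (hβ : β ≠ 0) (m : ℕ) :
    F m (p ^ β) = f (m - 1) β - f (m - 1) (β - 1) := by
  rw [F, Nat.primeFactors_prime_pow hβ hp, Finset.prod_singleton, hp.factorization_pow,
    Finsupp.single_eq_same]

lemma F_mul {a b : ℕ} (h : Nat.Coprime a b) (ha : a ≠ 0) (hb : b ≠ 0) (m : ℕ) :
    F m (a * b) = F m a * F m b := by
  rw [F, Nat.Coprime.primeFactors_mul h, Finset.prod_union h.disjoint_primeFactors, F, F]
  congr 1
  · refine Finset.prod_congr rfl fun p hp => ?_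
    have hpb : (b.factorization) p = 0 := by
      have : p ∉ b.primeFactors := Finset.disjoint_left.mp h.disjoint_primeFactors hp
      rwa [← Nat.support_factorization, Finsupp.notMem_support_iff] at this
    rw [Nat.factorization_mul ha hb, Finsupp.add_apply, hpb, Nat.add_zero]
  · refine Finset.prod_congr rfl fun p hp => ?_
    have hpa : (a.factorization) p = 0 := by
      have : p ∉ a.primeFactors := Finset.disjoint_right.mp h.disjoint_primeFactors hp
      rwa [← Nat.support_factorization, Finsupp.notMem_support_iff] at this
    rw [Nat.factorization_mul ha hb, Finsupp.add_apply, hpa, Nat.zero_add]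

open ArithmeticFunction in
noncomputable def Fa (m : ℕ) : ArithmeticFunction ℤ :=
  ⟨fun n => if n = 0 then 0 else F m n, by simp⟩

lemma Fa_apply (m n : ℕ) (hn : n ≠ 0) : Fa m n = F m n := by simp [Fa, hn]

open ArithmeticFunction in
lemma Fa_mult (m : ℕ) : (Fa m).IsMultiplicative := by
  refine ⟨by simp [Fa, F_one], ?_⟩
  intro a b h
  rcases eq_or_ne a 0 with rfl | ha
  · obtain rfl : b = 1 := Nat.coprime_zero_left b |>.mp h
    simp [Fa, F_one]
  rcases eq_or_ne b 0 with rfl | hb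
  · obtain rfl : a = 1 := Nat.coprime_zero_right a |>.mp h
    simp [Fa, F_one]
  rw [Fa_apply _ _ (Nat.mul_ne_zero ha hb), Fa_apply _ _ ha, Fa_apply _ _ hb, F_mul h ha hb]

lemma f_prod {m : ℕ} (hm : 1 ≤ m) {n : ℕ} (hn : n ≠ 0) :
    f m n = ∏ p ∈ n.primeFactors, f (m - 1) (n.factorization p) := by
  rcases eq_or_lt_of_le (Nat.one_le_iff_ne_zero.mpr hn) with h1 | h1
  · rw [← h1]; simp [f_one]
  have hprod : (∏ p ∈ n.primeFactors, f (m - 1) (n.factorization p)) =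
      if ∀ p ∈ n.primeFactors, H (n.factorization p) ≤ m - 1 then 1 else 0 := by
    simp only [f]
    exact Finset.prod_boole
  rw [hprod, f]
  refine if_congr ?_ rfl rfl
  rw [H_gt h1]
  constructor
  · intro h p hp
    have : (n.primeFactors.attach.sup fun p => H (n.factorization p.1)) ≤ m - 1 := by omega
    exact le_trans (Finset.le_sup (f := fun q => H (n.factorization q.1)) (Finset.mem_attach _ ⟨p, hp⟩)) this
  · intro h
    have : (n.primeFactors.attach.sup fun p => H (n.factorization p.1)) ≤ m - 1 :=
      Finset.sup_le fun p _ => h p.1 p.2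
    omega

open ArithmeticFunction in
lemma sum_divisors_F {m : ℕ} (hm : 1 ≤ m) {n : ℕ} (hn : n ≠ 0) :
    ∑ d ∈ n.divisors, F m d = f m n := by
  have hmult : ((↑(zeta) : ArithmeticFunction ℤ) * Fa m).IsMultiplicative :=
    isMultiplicative_zeta.natCast.mul (Fa_mult m)
  have happ : ∀ x : ℕ, ((↑(zeta) : ArithmeticFunction ℤ) * Fa m) x = ∑ d ∈ x.divisors, F m d := by
    intro x
    rw [coe_zeta_mul_apply]
    exact Finset.sum_congr rfl fun d hd => Fa_apply m d (Nat.pos_of_mem_divisors hd).ne'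
  have hpp : ∀ p β : ℕ, p.Prime → ((↑(zeta) : ArithmeticFunction ℤ) * Fa m) (p ^ β) = f (m - 1) β := by
    intro p β hp
    rw [happ, Nat.sum_divisors_prime_pow hp, Finset.sum_range_succ']
    have h1 : ∀ i ∈ Finset.range β, F m (p ^ (i + 1)) = f (m-1) (i+1) - f (m-1) i := by
      intro i _
      rw [F_prime_pow hp (Nat.succ_ne_zero i) m]
      simp
    rw [Finset.sum_congr rfl h1, Finset.sum_range_sub (f (m-1)), pow_zero, F_one, f_zero]
    ring
  rw [← happ, hmult.multiplicative_factorization _ hn, f_prod hm hn, Finsupp.prod]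
  refine Finset.prod_congr (Nat.support_factorization n) fun p hp => ?_
  exact hpp p _ (Nat.prime_of_mem_primeFactors hp)

lemma count_eq {m : ℕ} (hm : 1 ≤ m) (x : ℕ) :
    (((Finset.Icc 1 x).filter fun n => m < H n).card : ℤ) =
      -∑ d ∈ Finset.Icc 2 x, F m d * (x / d : ℕ) := by
  rcases Nat.eq_zero_or_pos x with rfl | hx
  · simp
  have hIcc : Finset.Icc 1 x = Finset.Ioc 0 x := by
    ext n; simp [Nat.lt_iff_add_one_le]
  -- sum of f over Icc 1 x
  have hsum : ∑ n ∈ Finset.Icc 1 x, f m n = ∑ d ∈ Finset.Icc 1 x, F m d * (x / d : ℕ) := by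
    have h1 : ∀ n ∈ Finset.Icc 1 x, f m n = ∑ d ∈ Finset.Icc 1 x, if d ∣ n then F m d else 0 := by
      intro n hn
      rw [Finset.mem_Icc] at hn
      rw [← sum_divisors_F hm (by omega)]
      have hdiv : n.divisors = (Finset.Icc 1 x).filter (· ∣ n) := by
        ext d
        simp only [Nat.mem_divisors, Finset.mem_filter, Finset.mem_Icc]
        constructor
        · intro ⟨hd, _⟩
          exact ⟨⟨Nat.one_le_iff_ne_zero.mpr (by rintro rfl; exact absurd (Nat.eq_zero_of_zero_dvd hd) (by omega)),
            le_trans (Nat.le_of_dvd (by omega) hd) hn.2⟩, hd⟩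
        · intro ⟨_, hd⟩; exact ⟨hd, by omega⟩
      rw [hdiv, Finset.sum_filter]
    rw [Finset.sum_congr rfl h1, Finset.sum_comm]
    refine Finset.sum_congr rfl fun d hd => ?_
    rw [← Finset.sum_filter, Finset.sum_const, nsmul_eq_mul, mul_comm]
    congr 1
    rw [hIcc, Nat.Ioc_filter_dvd_card_eq_div]
  -- card as sum
  have hcard : (((Finset.Icc 1 x).filter fun n => m < H n).card : ℤ) =
      (x : ℤ) - ∑ n ∈ Finset.Icc 1 x, f m n := by
    rw [← Finset.sum_boole]
    have : ∀ n ∈ Finset.Icc 1 x, (if m < H n then (1:ℤ) else 0) = 1 - f m n := by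
      intro n _
      by_cases h : m < H n
      · rw [if_pos h, f, if_neg (by omega)]; ring
      · rw [if_neg h, f, if_pos (by omega)]; ring
    rw [Finset.sum_congr rfl this, Finset.sum_sub_distrib, Finset.sum_const, Nat.card_Icc]
    simp
  -- split off d = 1
  have hsplit : ∑ d ∈ Finset.Icc 1 x, F m d * (x / d : ℕ) =
      (x : ℤ) + ∑ d ∈ Finset.Icc 2 x, F m d * (x / d : ℕ) := by
    have h1 : (1 : ℕ) ∈ Finset.Icc 1 x := Finset.mem_Icc.mpr ⟨le_rfl, hx⟩
    rw [← Finset.add_sum_erase _ _ h1]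
    congr 1
    · rw [F_one]; simp
    · congr 1
      ext d; simp only [Finset.mem_erase, Finset.mem_Icc]; omega
  rw [hcard, hsum, hsplit]
  ring

lemma F_abs_le (m d : ℕ) : |F m d| ≤ 1 := by
  rw [F, Finset.abs_prod]
  refine Finset.prod_le_one (fun p _ => abs_nonneg _) fun p _ => ?_
  unfold f
  split_ifs <;> simp

lemma F_factorization_two_le {m d : ℕ} (hF : F m d ≠ 0) {p : ℕ} (hp : p ∈ d.primeFactors) :
    2 ≤ d.factorization p := by
  by_contra h
  have h1 : d.factorization p = 1 := by
    have : d.factorization p ≠ 0 := by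
      rw [← Nat.support_factorization] at hp
      exact Finsupp.mem_support_iff.mp hp
    omega
  apply hF
  rw [F]
  apply Finset.prod_eq_zero hp
  rw [h1]
  simp [f_one, f_zero]

lemma exists_sq_cube {d : ℕ} (hd : d ≠ 0) (h : ∀ p ∈ d.primeFactors, 2 ≤ d.factorization p) :
    ∃ ab : ℕ × ℕ, ab.1 ^ 2 * ab.2 ^ 3 = d := by
  refine ⟨(∏ p ∈ d.primeFactors, p ^ ((d.factorization p - 3 * (d.factorization p % 2)) / 2),
          ∏ p ∈ d.primeFactors, p ^ (d.factorization p % 2)), ?_⟩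
  simp only
  rw [← Finset.prod_pow, ← Finset.prod_pow, ← Finset.prod_mul_distrib]
  have key : ∀ p ∈ d.primeFactors,
      (p ^ ((d.factorization p - 3 * (d.factorization p % 2)) / 2)) ^ 2 *
        (p ^ (d.factorization p % 2)) ^ 3 = p ^ d.factorization p := by
    intro p hp
    rw [← pow_mul, ← pow_mul, ← pow_add]
    congr 1
    have := h p hp
    omega
  rw [Finset.prod_congr rfl key]
  conv_rhs => rw [← Nat.factorization_prod_pow_eq_self hd]
  rw [Finsupp.prod]
  exact (Finset.prod_congr (Nat.support_factorization d) fun _ _ => rfl).symm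

open Classical in
noncomputable def phi : ℕ → ℕ × ℕ := fun d =>
  if h : ∃ ab : ℕ × ℕ, ab.1 ^ 2 * ab.2 ^ 3 = d then h.choose else (0, 0)

lemma phi_spec {d : ℕ} (h : ∃ ab : ℕ × ℕ, ab.1 ^ 2 * ab.2 ^ 3 = d) :
    (phi d).1 ^ 2 * (phi d).2 ^ 3 = d := by
  rw [phi, dif_pos h]
  exact h.choose_spec

lemma summable_v (m : ℕ) :
    Summable (fun d : ℕ => if 1 < d then |(F m d : ℝ) / d| else 0) := by
  have hs2 : Summable (fun a : ℕ => 1 / (a : ℝ) ^ 2) :=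
    Real.summable_one_div_nat_pow.mpr (by norm_num)
  have hs3 : Summable (fun a : ℕ => 1 / (a : ℝ) ^ 3) :=
    Real.summable_one_div_nat_pow.mpr (by norm_num)
  set C := (∑' a : ℕ, 1 / (a : ℝ) ^ 2) * (∑' b : ℕ, 1 / (b : ℝ) ^ 3) with hC
  apply summable_of_sum_range_le (c := C)
    (fun d => by split_ifs; exacts [abs_nonneg _, le_rfl])
  intro N
  have hwnn : ∀ d : ℕ, (0:ℝ) ≤ if 1 < d ∧ F m d ≠ 0 then 1 / (d : ℝ) else 0 := by
    intro d; split_ifs; exacts [by positivity, le_rfl]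
  have hvw : ∀ d : ℕ, (if 1 < d then |(F m d : ℝ) / d| else 0) ≤
      (if 1 < d ∧ F m d ≠ 0 then 1 / (d : ℝ) else 0) := by
    intro d
    by_cases h1 : 1 < d
    · by_cases h2 : F m d = 0
      · rw [if_pos h1, h2]
        simpa using hwnn d
      · rw [if_pos h1, if_pos ⟨h1, h2⟩, abs_div,
          abs_of_nonneg (by positivity : (0:ℝ) ≤ (d:ℝ))]
        have hF : |(F m d : ℝ)| ≤ 1 := by
          have := F_abs_le m d
          calc |(F m d : ℝ)| = ((|F m d| : ℤ) : ℝ) := by push_cast; ring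
            _ ≤ 1 := by exact_mod_cast this
        gcongr
    · rw [if_neg h1]; exact hwnn d
  refine le_trans (Finset.sum_le_sum fun d _ => hvw d) ?_
  set S := (Finset.range N).filter (fun d => 1 < d ∧ F m d ≠ 0) with hS
  have h1 : ∑ d ∈ Finset.range N, (if 1 < d ∧ F m d ≠ 0 then 1 / (d : ℝ) else 0) =
      ∑ d ∈ S, 1 / (d : ℝ) := by
    rw [hS, Finset.sum_filter]
  have hspec : ∀ d ∈ S, (phi d).1 ^ 2 * (phi d).2 ^ 3 = d := by
    intro d hd
    rw [hS, Finset.mem_filter] at hd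
    exact phi_spec (exists_sq_cube (by omega) fun p hp => F_factorization_two_le hd.2.2 hp)
  set g : ℕ × ℕ → ℝ := fun q => (1 / (q.1 : ℝ) ^ 2) * (1 / (q.2 : ℝ) ^ 3) with hg
  have hinj : ∀ a ∈ S, ∀ b ∈ S, phi a = phi b → a = b := by
    intro a ha b hb hab
    rw [← hspec a ha, ← hspec b hb, hab]
  have h2 : ∑ d ∈ S, 1 / (d : ℝ) = ∑ q ∈ S.image phi, g q := by
    rw [Finset.sum_image hinj]
    refine Finset.sum_congr rfl fun d hd => ?_
    rw [hg]
    conv_lhs => rw [← hspec d hd]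
    push_cast
    rw [div_mul_div_comm, one_mul]
  have h3 : ∑ q ∈ S.image phi, g q ≤ ∑ q ∈ Finset.range N ×ˢ Finset.range N, g q := by
    refine Finset.sum_le_sum_of_subset_of_nonneg ?_ (fun q _ _ => by rw [hg]; positivity)
    intro q hq
    obtain ⟨d, hd, rfl⟩ := Finset.mem_image.mp hq
    have hde := hspec d hd
    rw [hS, Finset.mem_filter, Finset.mem_range] at hd
    have ha1 : 1 ≤ (phi d).1 := by
      rcases Nat.eq_zero_or_pos (phi d).1 with h | h
      · rw [h] at hde; simp at hde; omega
      · exact h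
    have hb1 : 1 ≤ (phi d).2 := by
      rcases Nat.eq_zero_or_pos (phi d).2 with h | h
      · rw [h] at hde; simp at hde; omega
      · exact h
    have haN : (phi d).1 < N := by
      have q1 : (phi d).1 ≤ (phi d).1 ^ 2 := Nat.le_self_pow (by norm_num) _
      have q2 : (phi d).1 ^ 2 ≤ (phi d).1 ^ 2 * (phi d).2 ^ 3 :=
        Nat.le_mul_of_pos_right _ (by positivity)
      omega
    have hbN : (phi d).2 < N := by
      have q1 : (phi d).2 ≤ (phi d).2 ^ 3 := Nat.le_self_pow (by norm_num) _
      have q2 : (phi d).2 ^ 3 ≤ (phi d).1 ^ 2 * (phi d).2 ^ 3 :=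
        Nat.le_mul_of_pos_left _ (by positivity)
      omega
    exact Finset.mem_product.mpr ⟨Finset.mem_range.mpr haN, Finset.mem_range.mpr hbN⟩
  have h4 : ∑ q ∈ Finset.range N ×ˢ Finset.range N, g q =
      (∑ a ∈ Finset.range N, 1 / (a : ℝ) ^ 2) * (∑ b ∈ Finset.range N, 1 / (b : ℝ) ^ 3) := by
    rw [Finset.sum_mul_sum, Finset.sum_product]
  have h5 : (∑ a ∈ Finset.range N, 1 / (a : ℝ) ^ 2) *
      (∑ b ∈ Finset.range N, 1 / (b : ℝ) ^ 3) ≤ C := by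
    rw [hC]
    have p2 : ∑ a ∈ Finset.range N, 1 / (a : ℝ) ^ 2 ≤ ∑' a : ℕ, 1 / (a : ℝ) ^ 2 :=
      hs2.sum_le_tsum _ (fun a _ => by positivity)
    have p3 : ∑ b ∈ Finset.range N, 1 / (b : ℝ) ^ 3 ≤ ∑' b : ℕ, 1 / (b : ℝ) ^ 3 :=
      hs3.sum_le_tsum _ (fun b _ => by positivity)
    exact mul_le_mul p2 p3 (Finset.sum_nonneg fun b _ => by positivity)
      (le_trans (Finset.sum_nonneg fun a _ => by positivity) p2)
  calc ∑ d ∈ Finset.range N, (if 1 < d ∧ F m d ≠ 0 then 1 / (d : ℝ) else 0)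
      = ∑ d ∈ S, 1 / (d : ℝ) := h1
    _ = ∑ q ∈ S.image phi, g q := h2
    _ ≤ ∑ q ∈ Finset.range N ×ˢ Finset.range N, g q := h3
    _ = _ := h4
    _ ≤ C := h5

lemma div_cast_tendsto (d : ℕ) (hd : 1 < d) :
    Filter.Tendsto (fun x : ℕ => ((x / d : ℕ) : ℝ) / (x : ℝ)) Filter.atTop (nhds (1 / (d : ℝ))) := by
  have hd0 : (0:ℝ) < (d:ℝ) := by exact_mod_cast (by omega : 0 < d)
  have hlow : Filter.Tendsto (fun x : ℕ => 1 / (d:ℝ) - 1 / (x:ℝ)) Filter.atTop (nhds (1 / (d:ℝ))) := by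
    have := tendsto_one_div_atTop_nhds_zero_nat (𝕜 := ℝ)
    simpa using (tendsto_const_nhds (x := 1 / (d:ℝ))).sub this
  refine tendsto_of_tendsto_of_tendsto_of_le_of_le' hlow tendsto_const_nhds ?_ ?_
  · filter_upwards [Filter.eventually_ge_atTop 1] with x hx
    have hx0 : (0:ℝ) < (x:ℝ) := by exact_mod_cast hx
    have key : (x : ℝ) < ((x / d : ℕ) : ℝ) * d + d := by
      have h1 := Nat.div_add_mod x d
      have h2 : x % d < d := Nat.mod_lt x (by omega)
      have h3 : (d : ℝ) * ((x / d : ℕ) : ℝ) + ((x % d : ℕ) : ℝ) = (x : ℝ) := by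
        exact_mod_cast congrArg (Nat.cast : ℕ → ℝ) h1
      have h4 : ((x % d : ℕ) : ℝ) < (d : ℝ) := by exact_mod_cast h2
      linarith
    have h2 : (x:ℝ) - d ≤ ((x / d : ℕ) : ℝ) * d := by linarith
    rw [div_sub_div _ _ (ne_of_gt hd0) (ne_of_gt hx0), div_le_div_iff₀ (by positivity) hx0]
    nlinarith [mul_le_mul_of_nonneg_right h2 hx0.le]
  · filter_upwards [Filter.eventually_ge_atTop 1] with x hx
    have hx0 : (0:ℝ) < (x:ℝ) := by exact_mod_cast hx
    have h1 : ((x / d : ℕ) : ℝ) ≤ (x : ℝ) / d := Nat.cast_div_le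
    calc ((x / d : ℕ) : ℝ) / x ≤ ((x:ℝ)/d) / x := by gcongr
      _ = 1 / d := by field_simp


theorem stmt14 (k : ℕ) (hk : 2 ≤ k) :
    Summable (fun d : {d : ℕ // 1 < d} => |(F (k - 1) (d : ℕ) : ℝ) / ((d : ℕ) : ℝ)|) ∧
      Filter.Tendsto
        (fun x : ℕ => (((Finset.Icc 1 x).filter fun n => k ≤ H n).card : ℝ) / x)
        Filter.atTop
        (nhds (-∑' d : {d : ℕ // 1 < d}, (F (k - 1) (d : ℕ) : ℝ) / ((d : ℕ) : ℝ))) := by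
  set m := k - 1 with hmdef
  have hm : 1 ≤ m := by omega
  have hv := summable_v m
  have hsub : Summable (fun d : {d : ℕ // 1 < d} => |(F m (d : ℕ) : ℝ) / ((d : ℕ) : ℝ)|) := by
    have h2 := hv.subtype {d : ℕ | 1 < d}
    refine h2.congr fun d => ?_
    simp only [Function.comp_apply]
    exact if_pos d.2
  refine ⟨hsub, ?_⟩
  set L : ℕ → ℝ := fun d => if 1 < d then (F m d : ℝ) / d else 0 with hL
  set W : ℕ → ℕ → ℝ := fun x d => if 1 < d then (F m d : ℝ) * ((x / d : ℕ) : ℝ) / x else 0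
    with hW
  have h_tsum_eq : ∑' d : {d : ℕ // 1 < d}, (F m (d : ℕ) : ℝ) / ((d : ℕ) : ℝ) = ∑' d : ℕ, L d := by
    have e1 : ∑' d : {d : ℕ // 1 < d}, (F m (d : ℕ) : ℝ) / ((d : ℕ) : ℝ)
        = ∑' d : ℕ, Set.indicator {d : ℕ | 1 < d} (fun d => (F m d : ℝ) / d) d :=
      tsum_subtype {d : ℕ | 1 < d} (fun d => (F m d : ℝ) / d)
    rw [e1]
    refine tsum_congr fun d => ?_
    rw [hL]
    by_cases h : 1 < d <;> simp [Set.indicator_apply, h]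
  -- dominated convergence
  have hab : ∀ d : ℕ, Filter.Tendsto (fun x => W x d) Filter.atTop (nhds (L d)) := by
    intro d
    by_cases h : 1 < d
    · simp only [hW, hL, if_pos h]
      have base := div_cast_tendsto d h
      have := base.const_mul (F m d : ℝ)
      rw [mul_one_div] at this
      refine this.congr fun x => ?_
      rw [mul_div_assoc]
    · simp only [hW, hL, if_neg h]
      exact tendsto_const_nhds
  have hbd : ∀ᶠ x : ℕ in Filter.atTop, ∀ d : ℕ,
      ‖W x d‖ ≤ (if 1 < d then |(F m d : ℝ) / d| else 0) := by
    filter_upwards [Filter.eventually_ge_atTop 1] with x hx d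
    by_cases h : 1 < d
    · simp only [hW, if_pos h]
      have hx0 : (0:ℝ) < (x:ℝ) := by exact_mod_cast hx
      have hd0 : (0:ℝ) < (d:ℝ) := by exact_mod_cast (by omega : 0 < d)
      rw [Real.norm_eq_abs, abs_div, abs_mul, abs_of_nonneg (by positivity : (0:ℝ) ≤ ((x/d : ℕ):ℝ)),
        abs_of_nonneg hx0.le, abs_div, abs_of_nonneg hd0.le]
      have h1 : ((x / d : ℕ) : ℝ) ≤ (x : ℝ) / d := Nat.cast_div_le
      calc |(F m d : ℝ)| * ((x / d : ℕ) : ℝ) / x ≤ |(F m d : ℝ)| * ((x:ℝ)/d) / x := by gcongr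
        _ = |(F m d : ℝ)| / d * (x / x) := by ring
        _ = |(F m d : ℝ)| / d := by rw [div_self (ne_of_gt hx0), mul_one]
    · simp [hW, if_neg h, h]
  have hmain := tendsto_tsum_of_dominated_convergence hv hab hbd
  -- identify the finite sums
  have hWsum : ∀ x : ℕ, ∑' d : ℕ, W x d =
      ∑ d ∈ Finset.Icc 2 x, (F m d : ℝ) * ((x / d : ℕ) : ℝ) / x := by
    intro x
    rw [tsum_eq_sum (s := Finset.Icc 2 x) ?_]
    · refine Finset.sum_congr rfl fun d hd => ?_
      rw [Finset.mem_Icc] at hd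
      simp only [hW]
      rw [if_pos (by omega)]
    · intro d hd
      rw [Finset.mem_Icc] at hd
      by_cases h : 1 < d
      · have : x < d := by omega
        simp only [hW]
        rw [if_pos h, Nat.div_eq_of_lt this]
        simp
      · simp only [hW]
        rw [if_neg h]
  -- eventual equality with the counting function
  have hcong : ∀ᶠ x : ℕ in Filter.atTop,
      (((Finset.Icc 1 x).filter fun n => k ≤ H n).card : ℝ) / x = -(∑' d : ℕ, W x d) := by
    filter_upwards [Filter.eventually_ge_atTop 1] with x hx
    have hfilter : ((Finset.Icc 1 x).filter fun n => k ≤ H n) =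
        ((Finset.Icc 1 x).filter fun n => m < H n) := by
      refine Finset.filter_congr fun n _ => ?_
      constructor <;> intro h <;> omega
    have hcount := count_eq hm x
    rw [hWsum x, hfilter]
    have hcast := congrArg (Int.cast : ℤ → ℝ) hcount
    simp only [Int.cast_neg, Int.cast_sum, Int.cast_mul, Int.cast_natCast] at hcast
    rw [hcast, neg_div, Finset.sum_div]
  rw [h_tsum_eq]
  exact Filter.Tendsto.congr' (by filter_upwards [hcong] with x hx; rw [← hx]) hmain.neg
end

section
/- For x ≥ 2 define log* x to be the unique integer m ≥ 1 with 2↑↑m ≤ x < 2↑↑(m+1). Then for all n ≥ 2, H(n) ≤ log* n, where H is the super-factorization tree height. -/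
/-- `logStar x` is the largest `m` with `tet m ≤ x` (for `x ≥ 2` this is the unique `m ≥ 1`
with `tet m ≤ x < tet (m+1)`). -/
def logStar (x : ℕ) : ℕ := Nat.findGreatest (fun m => tet m ≤ x) x

lemma lt_tet (m : ℕ) : m < tet m := by
  induction m with
  | zero => simp [tet]
  | succ k ih =>
    have : tet k < 2 ^ tet k := Nat.lt_two_pow_self
    simp only [tet]
    omega

lemma tet_H_le : ∀ n : ℕ, 1 ≤ n → tet (H n) ≤ n := by
  intro n
  induction n using Nat.strong_induction_on with
  | _ n ih =>
    intro hn
    rcases le_or_gt n 1 with h1 | h1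
    · have : H n = 0 := by rw [H]; simp [h1]
      simp [this, tet]; omega
    · have hne : ¬ n ≤ 1 := by omega
      have hH : H n = 1 + (n.primeFactors.attach.sup fun p => H (n.factorization p.1)) := by
        rw [H]; simp [hne]
      have hnonempty : n.primeFactors.attach.Nonempty := by
        rw [Finset.attach_nonempty_iff]
        exact Nat.nonempty_primeFactors.mpr h1
      obtain ⟨q, hq, hqsup⟩ := Finset.exists_mem_eq_sup _ hnonempty
        (fun p => H (n.factorization p.1))
      set S := n.primeFactors.attach.sup fun p => H (n.factorization p.1) with hS
      set α := n.factorization q.1 with hα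
      have hqmem : q.1 ∈ n.primeFactors := q.2
      have hqp : q.1.Prime := Nat.prime_of_mem_primeFactors hqmem
      have hα1 : 1 ≤ α := (Nat.Prime.factorization_pos_of_dvd hqp (by omega)
        (Nat.dvd_of_mem_primeFactors hqmem))
      have hαlt : α < n := Nat.factorization_lt _ (by omega)
      have hih : tet (H α) ≤ α := ih α hαlt hα1
      have h2 : tet S ≤ α := by rw [hqsup]; exact hih
      have : tet (H n) = 2 ^ tet S := by rw [hH, Nat.add_comm]; rfl
      rw [this]
      calc 2 ^ tet S ≤ 2 ^ α := Nat.pow_le_pow_right (by norm_num) h2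
        _ ≤ q.1 ^ α := Nat.pow_le_pow_left hqp.two_le _
        _ ≤ n := Nat.ordProj_le _ (by omega)

theorem stmt16 (n : ℕ) (hn : 2 ≤ n) : H n ≤ logStar n := by
  have h1 := tet_H_le n (by omega)
  have h2 : H n ≤ n := le_of_lt (lt_of_lt_of_le (lt_tet _) h1)
  exact Nat.le_findGreatest h2 h1
end
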